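/- Let I = {1,…,b}, let P = P(I^ℕ) be the Borel probability measures on I^ℕ with the weak topology, and let S ⊂ P be a countable dense subset such that ν[y] > 0 for every ν ∈ S and y ∈ I^*. For ν ∈ S and n ∈ ℕ define R_{ν,n} = ∪_{k≥n} ∩_{y∈I^k} T_y^{−1} U(ν, 1/k), where T_y(μ) = μ_y is defined on {μ ∈ P : μ[y] > 0} and U(ν,ε) is the open π-ball of radius ε around ν. Then R_{ν,n} is open and dense in P. -/

import Mathlib

open MeasureTheory Filter Topology Set

noncomputable section

/-- The tree `I^ℕ`, `I = {1,…,b}`, as the space of sequences `ℕ → Fin b`. -/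
abbrev SeqI (b : ℕ) := ℕ → Fin b

/-- The cylinder `[y]` generated by a word `y ∈ I^k`. -/
def cylinder {b k : ℕ} (y : Fin k → Fin b) : Set (SeqI b) :=
  {x | ∀ i : Fin k, x i.1 = y i}

/-- The word `x|k` of the first `k` letters of `x`. -/
def prefixWord {b : ℕ} (x : SeqI b) (k : ℕ) : Fin k → Fin b := fun i => x i.1

/-- `μ_y`: the normalized restriction of `μ` to `[y]`, shifted back to `I^ℕ`;
it satisfies `μ_y[z] = μ[yz]/μ[y]`. -/
def submeasure {b k : ℕ} (μ : Measure (SeqI b)) (y : Fin k → Fin b) : Measure (SeqI b) :=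
  (μ (cylinder y))⁻¹ • Measure.map (fun x n => x (n + k)) (μ.restrict (cylinder y))

/-- `ν` is a micromeasure of `μ` at `x`: there exist `n_i ↗ ∞` with `μ_{x|n_i} → ν`
weakly (on the compact space `I^ℕ`, weak convergence is tested against all
continuous functions). -/
def IsMicromeasure {b : ℕ} (μ : Measure (SeqI b)) (x : SeqI b) (ν : Measure (SeqI b)) : Prop :=
  ∃ n : ℕ → ℕ, StrictMono n ∧ (∀ i, μ (cylinder (prefixWord x (n i))) ≠ 0) ∧
    ∀ φ : SeqI b → ℝ, Continuous φ →
      Tendsto (fun i => ∫ z, φ z ∂(submeasure μ (prefixWord x (n i)))) atTop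
        (𝓝 (∫ z, φ z ∂ν))


/-- The metric `d(x,y) = 2^{-(x∧y)}` on `I^ℕ`, where `x∧y` is the first index at
which `x` and `y` differ. -/
noncomputable def seqDist {b : ℕ} (x y : SeqI b) : ℝ :=
  open scoped Classical in
  if x = y then 0 else (2:ℝ) ^ (-(PiNat.firstDiff x y : ℤ))

/-- The metric `π(μ,ν) = sup |∫φ dμ − ∫φ dν|`, the sup over functions `φ : I^ℕ → ℝ`
with Lipschitz constant ≤ 1 (w.r.t. `seqDist`) and `‖φ‖_∞ ≤ 1`. -/
def piDist {b : ℕ} (μ ν : Measure (SeqI b)) : ℝ :=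
  ⨆ φ ∈ {φ : SeqI b → ℝ | (∀ x, |φ x| ≤ 1) ∧ ∀ x y, |φ x - φ y| ≤ seqDist x y},
    |∫ x, φ x ∂μ - ∫ x, φ x ∂ν|

/-- `R_{ν,n} = ∪_{k≥n} ∩_{y∈I^k} T_y⁻¹ U(ν,1/k)`, where `T_y(μ) = μ_y` is defined on
`{μ : μ[y] > 0}` and `U(ν,ε)` is the open `π`-ball around `ν`. -/
def Rmicro {b : ℕ} (ν : Measure (SeqI b)) (n : ℕ) : Set (ProbabilityMeasure (SeqI b)) :=
  ⋃ k ∈ Ici n, ⋂ y : Fin k → Fin b,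
    {μ | (μ : Measure (SeqI b)) (cylinder y) ≠ 0 ∧
      piDist (submeasure (μ : Measure (SeqI b)) y) ν < 1 / (k:ℝ)}



section Aux

open scoped ENNReal NNReal

variable {b : ℕ}



lemma measurable_shift (k : ℕ) : Measurable (fun (x : SeqI b) n => x (n + k)) :=
  measurable_pi_lambda _ fun n => measurable_pi_apply (n + k)

lemma continuous_shift (k : ℕ) : Continuous (fun (x : SeqI b) n => x (n + k)) :=
  continuous_pi fun n => continuous_apply (n + k)

lemma isClopen_cylinder {k : ℕ} (y : Fin k → Fin b) : IsClopen (cylinder y) := by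
  have : cylinder y = ⋂ i : Fin k, (fun x : SeqI b => x i.1) ⁻¹' {y i} := by
    ext x
    simp only [_root_.cylinder, mem_setOf_eq, mem_iInter, mem_preimage, mem_singleton_iff]
  rw [this]
  exact isClopen_iInter_of_finite (fun i =>
    (isClopen_discrete {y i}).preimage (continuous_apply i.1))

lemma measurableSet_cylinder {k : ℕ} (y : Fin k → Fin b) : MeasurableSet (cylinder y) :=
  (isClopen_cylinder y).isClosed.measurableSet

lemma mem_cylinder_prefixWord (x : SeqI b) (k : ℕ) : x ∈ cylinder (prefixWord x k) := by
  intro i; rfl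

lemma mem_cylinder_iff_prefixWord {k : ℕ} {x : SeqI b} {y : Fin k → Fin b} :
    x ∈ cylinder y ↔ prefixWord x k = y := by
  constructor
  · intro h; funext i; exact h i
  · rintro rfl; exact mem_cylinder_prefixWord x k

lemma pairwise_disjoint_cylinder (k : ℕ) :
    Pairwise (Function.onFun Disjoint (fun y : Fin k → Fin b => cylinder y)) := by
  intro y y' hne
  refine Set.disjoint_left.2 fun x hx hx' => hne ?_
  rw [mem_cylinder_iff_prefixWord] at hx hx'
  rw [← hx, ← hx']

lemma iUnion_cylinder (k : ℕ) : (⋃ y : Fin k → Fin b, cylinder y) = univ := by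
  refine eq_univ_of_forall fun x => mem_iUnion.2 ⟨prefixWord x k, mem_cylinder_prefixWord x k⟩

lemma sum_measure_cylinder (k : ℕ) (μ : Measure (SeqI b)) [IsProbabilityMeasure μ] :
    ∑ y : Fin k → Fin b, μ (cylinder y) = 1 := by
  rw [← tsum_fintype (L := .unconditional _), ← measure_iUnion (pairwise_disjoint_cylinder k)
    (fun y => measurableSet_cylinder y), iUnion_cylinder, measure_univ]

lemma seqDist_nonneg (x y : SeqI b) : 0 ≤ seqDist x y := by
  unfold seqDist
  split
  · exact le_refl 0
  · positivity

lemma seqDist_le_of_agree {k : ℕ} {x y : SeqI b} (h : ∀ i < k, x i = y i) :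
    seqDist x y ≤ (2:ℝ) ^ (-(k:ℤ)) := by
  unfold seqDist
  split
  · positivity
  · rename_i hne
    have hfd : k ≤ PiNat.firstDiff x y := by
      by_contra hlt
      push_neg at hlt
      exact PiNat.apply_firstDiff_ne hne (h _ hlt)
    exact zpow_le_zpow_right₀ one_le_two (by omega)

/-- the test set for piDist -/
def testSet (b : ℕ) : Set (SeqI b → ℝ) :=
  {φ : SeqI b → ℝ | (∀ x, |φ x| ≤ 1) ∧ ∀ x y, |φ x - φ y| ≤ seqDist x y}

lemma piDist_def (μ ν : Measure (SeqI b)) :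
    piDist μ ν = ⨆ φ ∈ testSet b, |∫ x, φ x ∂μ - ∫ x, φ x ∂ν| := rfl

lemma zero_mem_testSet : (0 : SeqI b → ℝ) ∈ testSet b := by
  constructor
  · intro x; simp
  · intro x y; simpa using seqDist_nonneg x y

lemma continuous_of_mem_testSet {φ : SeqI b → ℝ} (hφ : φ ∈ testSet b) : Continuous φ := by
  rw [continuous_iff_continuousAt]
  intro x
  rw [Metric.continuousAt_iff']
  intro ε hε
  obtain ⟨k, hk⟩ : ∃ k : ℕ, (2:ℝ) ^ (-(k:ℤ)) < ε := by
    obtain ⟨k, hk⟩ := exists_pow_lt_of_lt_one hε (by norm_num : (1/2 : ℝ) < 1)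
    exact ⟨k, by
      have : ((1:ℝ)/2) ^ k = (2:ℝ) ^ (-(k:ℤ)) := by
        rw [zpow_neg, zpow_natCast, one_div, inv_pow]
      linarith [this ▸ hk]⟩
  have hopen : IsOpen (cylinder (prefixWord x k)) := (isClopen_cylinder _).isOpen
  filter_upwards [hopen.mem_nhds (mem_cylinder_prefixWord x k)] with x' hx'
  have hagree : ∀ i < k, x' i = x i := fun i hi => hx' ⟨i, hi⟩
  calc dist (φ x') (φ x) = |φ x' - φ x| := by rw [Real.dist_eq]
    _ ≤ seqDist x' x := hφ.2 x' x
    _ ≤ (2:ℝ) ^ (-(k:ℤ)) := seqDist_le_of_agree hagree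
    _ < ε := hk

lemma integrable_of_mem_testSet {φ : SeqI b → ℝ} (hφ : φ ∈ testSet b)
    (μ : Measure (SeqI b)) [IsFiniteMeasure μ] : Integrable φ μ :=
  (continuous_of_mem_testSet hφ).integrable_of_hasCompactSupport
    (HasCompactSupport.of_compactSpace _)

lemma abs_integral_le_one {φ : SeqI b → ℝ} (hφ : φ ∈ testSet b)
    (μ : Measure (SeqI b)) [IsProbabilityMeasure μ] : |∫ x, φ x ∂μ| ≤ 1 := by
  have := norm_integral_le_of_norm_le_const (μ := μ) (f := φ) (C := 1)
    (Filter.Eventually.of_forall fun x => by simpa using hφ.1 x)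
  simpa using this

lemma elem_le_two {φ : SeqI b → ℝ} (hφ : φ ∈ testSet b)
    (μ ν : Measure (SeqI b)) [IsProbabilityMeasure μ] [IsProbabilityMeasure ν] :
    |∫ x, φ x ∂μ - ∫ x, φ x ∂ν| ≤ 2 := by
  calc |∫ x, φ x ∂μ - ∫ x, φ x ∂ν| ≤ |∫ x, φ x ∂μ| + |∫ x, φ x ∂ν| := abs_sub _ _
    _ ≤ 1 + 1 := add_le_add (abs_integral_le_one hφ μ) (abs_integral_le_one hφ ν)
    _ = 2 := by norm_num

lemma piDist_le {μ ν : Measure (SeqI b)} {B : ℝ} (hB : 0 ≤ B)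
    (h : ∀ φ ∈ testSet b, |∫ x, φ x ∂μ - ∫ x, φ x ∂ν| ≤ B) : piDist μ ν ≤ B := by
  rw [piDist_def]
  exact Real.iSup_le (fun φ => Real.iSup_le (fun hφ => h φ hφ) hB) hB

lemma le_piDist {φ : SeqI b → ℝ} (hφ : φ ∈ testSet b)
    (μ ν : Measure (SeqI b)) [IsProbabilityMeasure μ] [IsProbabilityMeasure ν] :
    |∫ x, φ x ∂μ - ∫ x, φ x ∂ν| ≤ piDist μ ν := by
  rw [piDist_def]
  have hbdd : BddAbove (Set.range fun φ : SeqI b → ℝ =>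
      ⨆ _ : φ ∈ testSet b, |∫ x, φ x ∂μ - ∫ x, φ x ∂ν|) := by
    refine ⟨2, ?_⟩
    rintro r ⟨ψ, rfl⟩
    exact Real.iSup_le (fun hψ => elem_le_two hψ μ ν) (by norm_num)
  calc |∫ x, φ x ∂μ - ∫ x, φ x ∂ν|
      = ⨆ _ : φ ∈ testSet b, |∫ x, φ x ∂μ - ∫ x, φ x ∂ν| := by
        haveI : Nonempty (φ ∈ testSet b) := ⟨hφ⟩
        rw [ciSup_const]
    _ ≤ _ := le_ciSup hbdd φ

lemma piDist_nonneg (μ ν : Measure (SeqI b)) [IsProbabilityMeasure μ] [IsProbabilityMeasure ν] :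
    0 ≤ piDist μ ν := by
  have := le_piDist (zero_mem_testSet (b := b)) μ ν
  simpa using this

lemma piDist_self_nonpos (μ : Measure (SeqI b)) : piDist μ μ ≤ 0 :=
  piDist_le le_rfl (fun φ _ => by simp)

lemma piDist_triangle (ρ τ σ : Measure (SeqI b)) [IsProbabilityMeasure ρ]
    [IsProbabilityMeasure τ] [IsProbabilityMeasure σ] :
    piDist ρ σ ≤ piDist ρ τ + piDist τ σ := by
  refine piDist_le (add_nonneg (piDist_nonneg ρ τ) (piDist_nonneg τ σ)) fun φ hφ => ?_
  calc |∫ x, φ x ∂ρ - ∫ x, φ x ∂σ|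
      ≤ |∫ x, φ x ∂ρ - ∫ x, φ x ∂τ| + |∫ x, φ x ∂τ - ∫ x, φ x ∂σ| := abs_sub_le _ _ _
    _ ≤ piDist ρ τ + piDist τ σ := add_le_add (le_piDist hφ ρ τ) (le_piDist hφ τ σ)

/-- prepend the word `y` to a sequence -/
def prepend {k : ℕ} (y : Fin k → Fin b) (z : SeqI b) : SeqI b :=
  fun n => if h : n < k then y ⟨n, h⟩ else z (n - k)

lemma continuous_prepend {k : ℕ} (y : Fin k → Fin b) : Continuous (prepend y) := by
  refine continuous_pi fun n => ?_
  unfold prepend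
  split
  · exact continuous_const
  · exact continuous_apply _

lemma measurable_prepend {k : ℕ} (y : Fin k → Fin b) : Measurable (prepend y) :=
  (continuous_prepend y).measurable

lemma shift_prepend {k : ℕ} (y : Fin k → Fin b) (z : SeqI b) :
    (fun n => prepend y z (n + k)) = z := by
  funext n
  unfold prepend
  rw [dif_neg (by omega)]
  congr 1
  omega

lemma prepend_mem_cylinder {k : ℕ} (y : Fin k → Fin b) (z : SeqI b) :
    prepend y z ∈ cylinder y := by
  intro i
  unfold prepend
  rw [dif_pos i.2]

lemma prepend_shift {k : ℕ} {y : Fin k → Fin b} {x : SeqI b} (hx : x ∈ cylinder y) :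
    prepend y (fun n => x (n + k)) = x := by
  funext n
  unfold prepend
  split
  · rename_i h
    exact (hx ⟨n, h⟩).symm
  · show x (n - k + k) = x n
    congr 1
    omega

lemma prepend_preimage_cylinder_self {k : ℕ} (y : Fin k → Fin b) :
    prepend y ⁻¹' cylinder y = univ :=
  eq_univ_of_forall fun z => prepend_mem_cylinder y z

lemma prepend_preimage_cylinder_ne {k : ℕ} {y y' : Fin k → Fin b} (h : y' ≠ y) :
    prepend y ⁻¹' cylinder y' = ∅ := by
  refine eq_empty_of_forall_notMem fun z hz => h ?_
  funext i
  rw [← hz i]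
  unfold prepend
  rw [dif_pos i.2]

/-- concatenation of words -/
def wordApp {k m : ℕ} (y : Fin k → Fin b) (w : Fin m → Fin b) : Fin (k + m) → Fin b :=
  fun i => if h : i.1 < k then y ⟨i.1, h⟩ else w ⟨i.1 - k, by omega⟩

lemma wordApp_left {k m : ℕ} (y : Fin k → Fin b) (w : Fin m → Fin b) (i : Fin (k + m))
    (h : i.1 < k) : wordApp y w i = y ⟨i.1, h⟩ := by
  unfold wordApp; exact dif_pos h

lemma wordApp_right {k m : ℕ} (y : Fin k → Fin b) (w : Fin m → Fin b) (i : Fin (k + m))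
    (h : ¬ i.1 < k) : wordApp y w i = w ⟨i.1 - k, by omega⟩ := by
  unfold wordApp; exact dif_neg h

lemma cylinder_wordApp {k m : ℕ} (y : Fin k → Fin b) (w : Fin m → Fin b) :
    cylinder (wordApp y w) = cylinder y ∩ (fun (x : SeqI b) n => x (n + k)) ⁻¹' cylinder w := by
  ext x
  constructor
  · intro h
    refine ⟨fun i => ?_, fun j => ?_⟩
    · have h0 := h ⟨i.1, by omega⟩
      rwa [wordApp_left y w _ i.2] at h0
    · show x (j.1 + k) = w j
      have h0 := h ⟨j.1 + k, by omega⟩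
      rw [wordApp_right y w _ (by simp only [Fin.val_mk]; omega)] at h0
      rw [h0]
      congr 1
      exact Fin.ext (by simp)
  · rintro ⟨h1, h2⟩ i
    by_cases h : i.1 < k
    · rw [wordApp_left y w i h]
      exact h1 ⟨i.1, h⟩
    · rw [wordApp_right y w i h]
      have h4 : i.1 - k + k = i.1 := by omega
      have h3 : x (i.1 - k + k) = w ⟨i.1 - k, by omega⟩ := h2 ⟨i.1 - k, by omega⟩
      exact (congrArg x h4).symm.trans h3

lemma submeasure_apply {k : ℕ} (μ : Measure (SeqI b)) (y : Fin k → Fin b)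
    {s : Set (SeqI b)} (hs : MeasurableSet s) :
    submeasure μ y s
      = (μ (cylinder y))⁻¹ * μ (cylinder y ∩ (fun (x : SeqI b) n => x (n + k)) ⁻¹' s) := by
  rw [submeasure, Measure.smul_apply, smul_eq_mul,
    Measure.map_apply (measurable_shift k) hs,
    Measure.restrict_apply (measurable_shift k hs), inter_comm]

lemma submeasure_cylinder {k m : ℕ} (μ : Measure (SeqI b)) (y : Fin k → Fin b)
    (w : Fin m → Fin b) :
    submeasure μ y (cylinder w) = (μ (cylinder y))⁻¹ * μ (cylinder (wordApp y w)) := by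
  rw [submeasure_apply μ y (measurableSet_cylinder w), cylinder_wordApp]

theorem submeasure_prob {k : ℕ} (μ : Measure (SeqI b)) [IsProbabilityMeasure μ]
    (y : Fin k → Fin b) (h : μ (cylinder y) ≠ 0) :
    IsProbabilityMeasure (submeasure μ y) := by
  constructor
  rw [submeasure_apply μ y MeasurableSet.univ]
  simp only [preimage_univ, inter_univ]
  exact ENNReal.inv_mul_cancel h (measure_ne_top μ _)

/-- the canonical extension of a word to a sequence (pad with 0) -/
def wordExt (hb : 0 < b) {m : ℕ} (w : Fin m → Fin b) : SeqI b :=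
  prepend w (fun _ => ⟨0, hb⟩)

lemma wordExt_agree (hb : 0 < b) {m : ℕ} {x : SeqI b} :
    ∀ i < m, x i = wordExt hb (prefixWord x m) i := by
  intro i hi
  unfold wordExt prepend
  rw [dif_pos hi]
  rfl

/-- key discretization bound -/
lemma piDist_le_sum (hb : 0 < b) (ρ σ : Measure (SeqI b)) [IsProbabilityMeasure ρ]
    [IsProbabilityMeasure σ] (m : ℕ) :
    piDist ρ σ ≤ (∑ w : Fin m → Fin b, |(ρ (cylinder w)).toReal - (σ (cylinder w)).toReal|)
      + 2 * (2:ℝ) ^ (-(m:ℤ)) := by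
  have hRHS : 0 ≤ (∑ w : Fin m → Fin b, |(ρ (cylinder w)).toReal - (σ (cylinder w)).toReal|)
      + 2 * (2:ℝ) ^ (-(m:ℤ)) := by positivity
  refine piDist_le hRHS fun φ hφ => ?_
  -- the discretized function
  set ψ : SeqI b → ℝ := fun x => φ (wordExt hb (prefixWord x m)) with hψ
  have hψ_eq : ψ = fun x => ∑ w : Fin m → Fin b,
      (cylinder w).indicator (fun _ => φ (wordExt hb w)) x := by
    funext x
    rw [Finset.sum_eq_single (prefixWord x m)]
    · rw [indicator_of_mem (mem_cylinder_prefixWord x m)]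
    · intro w _ hw
      rw [indicator_of_notMem]
      rw [mem_cylinder_iff_prefixWord]
      exact Ne.symm hw
    · intro h
      exact absurd (Finset.mem_univ _) h
  have hψ_int : ∀ (τ : Measure (SeqI b)), IsProbabilityMeasure τ → Integrable ψ τ := by
    intro τ _
    rw [hψ_eq]
    exact integrable_finset_sum _ fun w _ =>
      (integrable_const _).indicator (measurableSet_cylinder w)
  have hψ_integral : ∀ (τ : Measure (SeqI b)), IsProbabilityMeasure τ →
      ∫ x, ψ x ∂τ = ∑ w : Fin m → Fin b, (τ (cylinder w)).toReal * φ (wordExt hb w) := by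
    intro τ _
    rw [hψ_eq]
    rw [integral_finset_sum _ fun w _ =>
      (integrable_const _).indicator (measurableSet_cylinder w)]
    congr 1
    funext w
    rw [integral_indicator_const _ (measurableSet_cylinder w), smul_eq_mul]; rfl
  have hφψ : ∀ x, |φ x - ψ x| ≤ (2:ℝ) ^ (-(m:ℤ)) := by
    intro x
    calc |φ x - ψ x| ≤ seqDist x (wordExt hb (prefixWord x m)) := hφ.2 _ _
      _ ≤ (2:ℝ) ^ (-(m:ℤ)) := seqDist_le_of_agree (wordExt_agree hb)
  have hsub : ∀ (τ : Measure (SeqI b)), IsProbabilityMeasure τ →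
      |∫ x, φ x ∂τ - ∫ x, ψ x ∂τ| ≤ (2:ℝ) ^ (-(m:ℤ)) := by
    intro τ hτ
    rw [← integral_sub (integrable_of_mem_testSet hφ τ) (hψ_int τ hτ)]
    have := norm_integral_le_of_norm_le_const (μ := τ) (f := fun x => φ x - ψ x)
      (C := (2:ℝ) ^ (-(m:ℤ))) (Filter.Eventually.of_forall fun x => by
        simpa using hφψ x)
    simpa using this
  have hmid : |∫ x, ψ x ∂ρ - ∫ x, ψ x ∂σ|
      ≤ ∑ w : Fin m → Fin b, |(ρ (cylinder w)).toReal - (σ (cylinder w)).toReal| := by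
    rw [hψ_integral ρ inferInstance, hψ_integral σ inferInstance, ← Finset.sum_sub_distrib]
    refine (Finset.abs_sum_le_sum_abs _ _).trans ?_
    refine Finset.sum_le_sum fun w _ => ?_
    rw [← sub_mul, abs_mul]
    calc |(ρ (cylinder w)).toReal - (σ (cylinder w)).toReal| * |φ (wordExt hb w)|
        ≤ |(ρ (cylinder w)).toReal - (σ (cylinder w)).toReal| * 1 :=
          mul_le_mul_of_nonneg_left (hφ.1 _) (abs_nonneg _)
      _ = _ := mul_one _
  calc |∫ x, φ x ∂ρ - ∫ x, φ x ∂σ|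
      = |(∫ x, φ x ∂ρ - ∫ x, ψ x ∂ρ) + (∫ x, ψ x ∂ρ - ∫ x, ψ x ∂σ)
          + (∫ x, ψ x ∂σ - ∫ x, φ x ∂σ)| := by ring_nf
    _ ≤ |(∫ x, φ x ∂ρ - ∫ x, ψ x ∂ρ) + (∫ x, ψ x ∂ρ - ∫ x, ψ x ∂σ)|
          + |∫ x, ψ x ∂σ - ∫ x, φ x ∂σ| := abs_add_le _ _
    _ ≤ |∫ x, φ x ∂ρ - ∫ x, ψ x ∂ρ| + |∫ x, ψ x ∂ρ - ∫ x, ψ x ∂σ|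
          + |∫ x, ψ x ∂σ - ∫ x, φ x ∂σ| := add_le_add_left (abs_add_le _ _) _
    _ ≤ (2:ℝ) ^ (-(m:ℤ)) + (∑ w : Fin m → Fin b,
          |(ρ (cylinder w)).toReal - (σ (cylinder w)).toReal|) + (2:ℝ) ^ (-(m:ℤ)) :=
        add_le_add (add_le_add (hsub ρ inferInstance) hmid)
          (by rw [abs_sub_comm]; exact hsub σ inferInstance)
    _ = _ := by ring

/-- the indicator of a cylinder as a bounded continuous function -/
def cylIndicator {k : ℕ} (y : Fin k → Fin b) : BoundedContinuousFunction (SeqI b) ℝ :=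
  BoundedContinuousFunction.ofNormedAddCommGroup
    ((cylinder y).indicator (fun _ => (1:ℝ)))
    (by
      classical
      have : Continuous ((cylinder y).piecewise (fun _ => (1:ℝ)) (fun _ => 0)) := by
        refine continuous_const.piecewise ?_ continuous_const
        intro a ha
        rw [(isClopen_cylinder y).frontier_eq] at ha  -- check name
        exact absurd ha (notMem_empty a)
      convert this using 1; ext x; by_cases h : x ∈ cylinder y <;> simp [h, Set.indicator, Set.piecewise])
    1
    (fun x => by
      rw [Real.norm_eq_abs]
      by_cases h : x ∈ cylinder y <;> simp [Set.indicator, h])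

lemma integral_cylIndicator {k : ℕ} (y : Fin k → Fin b) (μ : Measure (SeqI b)) :
    ∫ x, cylIndicator y x ∂μ = (μ (cylinder y)).toReal := by
  show ∫ x, (cylinder y).indicator (fun _ => (1:ℝ)) x ∂μ = _
  rw [integral_indicator_const _ (measurableSet_cylinder y), smul_eq_mul, mul_one]; rfl

/-- continuity of cylinder masses in the weak topology -/
lemma continuous_cylMass {k : ℕ} (y : Fin k → Fin b) :
    Continuous (fun μ : ProbabilityMeasure (SeqI b) =>
      ((μ : Measure (SeqI b)) (cylinder y)).toReal) := by
  rw [continuous_iff_continuousAt]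
  intro μ0
  have h := (ProbabilityMeasure.tendsto_iff_forall_integral_tendsto
    (μs := (id : ProbabilityMeasure (SeqI b) → ProbabilityMeasure (SeqI b)))
    (F := 𝓝 μ0) (μ := μ0)).mp tendsto_id (cylIndicator y)
  simp only [id_eq, integral_cylIndicator] at h
  exact h

/-- uniform continuity of a continuous function on the tree -/
lemma unif_cont {f : SeqI b → ℝ} (hf : Continuous f) {ε : ℝ} (hε : 0 < ε) :
    ∃ m : ℕ, ∀ x x' : SeqI b, (∀ i < m, x i = x' i) → |f x - f x'| ≤ ε := by
  by_contra hcon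
  push_neg at hcon
  set C : ℕ → Set (SeqI b × SeqI b) := fun m =>
    {p | ε ≤ |f p.1 - f p.2|} ∩ {p | ∀ i < m, p.1 i = p.2 i} with hC
  have hclosed : ∀ m, IsClosed (C m) := by
    intro m
    refine IsClosed.inter ?_ ?_
    · have : Continuous fun p : SeqI b × SeqI b => |f p.1 - f p.2| :=
        ((hf.comp continuous_fst).sub (hf.comp continuous_snd)).abs
      exact isClosed_le continuous_const this
    · have : {p : SeqI b × SeqI b | ∀ i < m, p.1 i = p.2 i}
          = ⋂ i ∈ Finset.range m, {p : SeqI b × SeqI b | p.1 i = p.2 i} := by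
        ext p; simp
      rw [this]
      refine isClosed_biInter fun i _ => ?_
      exact isClosed_eq ((continuous_apply i).comp continuous_fst)
        ((continuous_apply i).comp continuous_snd)
  have hnonempty : ∀ m, (C m).Nonempty := by
    intro m
    obtain ⟨x, x', hagree, hgt⟩ := hcon m
    exact ⟨(x, x'), le_of_lt hgt, hagree⟩
  have hdir : Directed (· ⊇ ·) C := by
    have hanti : Antitone C := by
      intro m m' hmm'
      exact inter_subset_inter_right _ (fun p hp i hi => hp i (lt_of_lt_of_le hi hmm'))
    intro m m'
    exact ⟨max m m', hanti (le_max_left _ _), hanti (le_max_right _ _)⟩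
  have hcompact : ∀ m, IsCompact (C m) := fun m => (hclosed m).isCompact
  obtain ⟨p, hp⟩ := IsCompact.nonempty_iInter_of_directed_nonempty_isCompact_isClosed
    C hdir hnonempty hcompact hclosed
  have heq : p.1 = p.2 := by
    funext i
    exact (mem_iInter.mp hp (i + 1)).2 i (Nat.lt_succ_self i)
  have := (mem_iInter.mp hp 0).1
  simp only [mem_setOf_eq] at this
  rw [heq, sub_self, abs_zero] at this
  exact absurd this (not_le.mpr hε)

lemma exists_pow_small {δ : ℝ} (hδ : 0 < δ) : ∃ m : ℕ, 2 * (2:ℝ) ^ (-(m:ℤ)) < δ := by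
  obtain ⟨m, hm⟩ := exists_pow_lt_of_lt_one (half_pos hδ) (by norm_num : (1/2:ℝ) < 1)
  refine ⟨m, ?_⟩
  have : ((1:ℝ)/2) ^ m = (2:ℝ) ^ (-(m:ℤ)) := by
    rw [zpow_neg, zpow_natCast, one_div, inv_pow]
  linarith [this ▸ hm]

lemma submeasure_cyl_toReal {k m : ℕ} (μ : Measure (SeqI b)) (y : Fin k → Fin b)
    (w : Fin m → Fin b) :
    (submeasure μ y (cylinder w)).toReal
      = (μ (cylinder (wordApp y w))).toReal / (μ (cylinder y)).toReal := by
  rw [submeasure_cylinder, ENNReal.toReal_mul, ENNReal.toReal_inv, inv_mul_eq_div]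

theorem isOpen_Rmicro (hb : 0 < b) (ν : Measure (SeqI b)) [IsProbabilityMeasure ν] (n : ℕ) :
    IsOpen (Rmicro ν n) := by
  refine isOpen_biUnion fun k _ => isOpen_iInter_of_finite fun y => ?_
  rw [isOpen_iff_mem_nhds]
  rintro μ0 ⟨h1, h2⟩
  haveI : IsProbabilityMeasure (submeasure (μ0 : Measure (SeqI b)) y) :=
    submeasure_prob _ y h1
  set c := piDist (submeasure (μ0 : Measure (SeqI b)) y) ν with hc
  have hck : 0 < 1 / (k:ℝ) - c := by linarith
  set δ := (1 / (k:ℝ) - c) / 2 with hδdef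
  have hδ : 0 < δ := by positivity
  obtain ⟨m, hm⟩ := exists_pow_small hδ
  have hden : ((μ0 : Measure (SeqI b)) (cylinder y)).toReal ≠ 0 :=
    ENNReal.toReal_ne_zero.mpr ⟨h1, measure_ne_top _ _⟩
  -- the ratio functionals
  set Q : (Fin m → Fin b) → ProbabilityMeasure (SeqI b) → ℝ := fun w μ =>
    ((μ : Measure (SeqI b)) (cylinder (wordApp y w))).toReal
      / ((μ : Measure (SeqI b)) (cylinder y)).toReal with hQ
  have hQc : ∀ w, ContinuousAt (Q w) μ0 :=
    fun w => ((continuous_cylMass (wordApp y w)).continuousAt).div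
      ((continuous_cylMass y).continuousAt) hden
  set G : ProbabilityMeasure (SeqI b) → ℝ := fun μ => ∑ w : Fin m → Fin b, |Q w μ - Q w μ0|
    with hG
  have hGt : Tendsto G (𝓝 μ0) (𝓝 0) := by
    have : Tendsto G (𝓝 μ0) (𝓝 (∑ w : Fin m → Fin b, |Q w μ0 - Q w μ0|)) := by
      refine tendsto_finset_sum _ fun w _ => ?_
      exact (((hQc w).sub tendsto_const_nhds).abs :)
    simpa using this
  have hGev : {μ : ProbabilityMeasure (SeqI b) | G μ < δ} ∈ 𝓝 μ0 := by
    have := hGt (Iio_mem_nhds hδ)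
    simpa [preimage] using this
  have hposev : {μ : ProbabilityMeasure (SeqI b) |
      ((μ : Measure (SeqI b)) (cylinder y)).toReal ≠ 0} ∈ 𝓝 μ0 := by
    have := (continuous_cylMass y).continuousAt (x := μ0) (compl_singleton_mem_nhds hden)
    simpa [preimage, compl_def] using this
  filter_upwards [hGev, hposev] with μ hμG hμpos
  have hμ1 : (μ : Measure (SeqI b)) (cylinder y) ≠ 0 := by
    intro h0
    exact hμpos (by rw [h0, ENNReal.toReal_zero])
  haveI : IsProbabilityMeasure (submeasure (μ : Measure (SeqI b)) y) :=
    submeasure_prob _ y hμ1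
  refine ⟨hμ1, ?_⟩
  have htri := piDist_triangle (submeasure (μ : Measure (SeqI b)) y)
    (submeasure (μ0 : Measure (SeqI b)) y) ν
  have hsum := piDist_le_sum hb (submeasure (μ : Measure (SeqI b)) y)
    (submeasure (μ0 : Measure (SeqI b)) y) m
  have hsum_eq : (∑ w : Fin m → Fin b,
      |(submeasure (μ : Measure (SeqI b)) y (cylinder w)).toReal
        - (submeasure (μ0 : Measure (SeqI b)) y (cylinder w)).toReal|) = G μ := by
    refine Finset.sum_congr rfl fun w _ => ?_
    rw [submeasure_cyl_toReal, submeasure_cyl_toReal]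
  rw [hsum_eq] at hsum
  have : piDist (submeasure (μ : Measure (SeqI b)) y) ν ≤ G μ + 2 * (2:ℝ) ^ (-(m:ℤ)) + c :=
    htri.trans (by linarith)
  calc piDist (submeasure (μ : Measure (SeqI b)) y) ν
      ≤ G μ + 2 * (2:ℝ) ^ (-(m:ℤ)) + c := this
    _ < δ + δ + c := by
        have := hμG
        linarith
    _ = 1 / (k:ℝ) := by rw [hδdef]; ring

/-- the mixture coefficient -/
def coef (μ : Measure (SeqI b)) (k : ℕ) (y : Fin k → Fin b) : ℝ≥0∞ :=
  (1 - ((k:ℝ≥0∞) + 1)⁻¹) * μ (cylinder y) + ((k:ℝ≥0∞) + 1)⁻¹ * ((b:ℝ≥0∞) ^ k)⁻¹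

lemma eps_ne_zero (k : ℕ) : ((k:ℝ≥0∞) + 1)⁻¹ ≠ 0 :=
  ENNReal.inv_ne_zero.mpr (by simp [ENNReal.add_eq_top])

lemma eps_ne_top (k : ℕ) : ((k:ℝ≥0∞) + 1)⁻¹ ≠ ⊤ :=
  ENNReal.inv_ne_top.mpr (fun h => by simp [add_eq_zero] at h)

lemma eps_le_one (k : ℕ) : ((k:ℝ≥0∞) + 1)⁻¹ ≤ 1 :=
  ENNReal.inv_le_one.mpr le_add_self

lemma bpow_ne_zero (hb : 0 < b) (k : ℕ) : ((b:ℝ≥0∞)) ^ k ≠ 0 :=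
  pow_ne_zero _ (by exact_mod_cast hb.ne')

lemma bpow_ne_top (k : ℕ) : ((b:ℝ≥0∞)) ^ k ≠ ⊤ :=
  ENNReal.pow_ne_top (ENNReal.natCast_ne_top b)

lemma coef_ne_zero (hb : 0 < b) (μ : Measure (SeqI b)) (k : ℕ) (y : Fin k → Fin b) :
    coef μ k y ≠ 0 := by
  intro h
  rw [coef, add_eq_zero] at h
  exact (mul_ne_zero (eps_ne_zero k) (ENNReal.inv_ne_zero.mpr (bpow_ne_top k))) h.2

lemma coef_ne_top (hb : 0 < b) (μ : Measure (SeqI b)) [IsFiniteMeasure μ] (k : ℕ)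
    (y : Fin k → Fin b) : coef μ k y ≠ ⊤ := by
  rw [coef]
  refine ENNReal.add_ne_top.mpr ⟨ENNReal.mul_ne_top ?_ (measure_ne_top _ _),
    ENNReal.mul_ne_top (eps_ne_top k) (ENNReal.inv_ne_top.mpr (bpow_ne_zero hb k))⟩
  exact ne_top_of_le_ne_top ENNReal.one_ne_top tsub_le_self

lemma sum_coef (hb : 0 < b) (μ : Measure (SeqI b)) [IsProbabilityMeasure μ] (k : ℕ) :
    ∑ y : Fin k → Fin b, coef μ k y = 1 := by
  have h1 : ∑ y : Fin k → Fin b, coef μ k y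
      = (1 - ((k:ℝ≥0∞) + 1)⁻¹) * (∑ y : Fin k → Fin b, μ (cylinder y))
        + ((k:ℝ≥0∞) + 1)⁻¹ * (∑ _y : Fin k → Fin b, ((b:ℝ≥0∞) ^ k)⁻¹) := by
    rw [Finset.mul_sum, Finset.mul_sum, ← Finset.sum_add_distrib]
    exact Finset.sum_congr rfl fun y _ => rfl
  rw [h1, sum_measure_cylinder, Finset.sum_const, nsmul_eq_mul]
  have hcard : ((Finset.univ : Finset (Fin k → Fin b)).card : ℝ≥0∞) = ((b:ℝ≥0∞))^k := by
    rw [Finset.card_univ, Fintype.card_fun]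
    simp
  rw [hcard, ENNReal.mul_inv_cancel (bpow_ne_zero hb k) (bpow_ne_top k), mul_one, mul_one,
    tsub_add_cancel_of_le (eps_le_one k)]

/-- the approximating mixture measure -/
def mixM (μ ν : Measure (SeqI b)) (k : ℕ) : Measure (SeqI b) :=
  ∑ y : Fin k → Fin b, coef μ k y • Measure.map (prepend y) ν

lemma map_prepend_cylinder (ν : Measure (SeqI b)) [IsProbabilityMeasure ν] {k : ℕ}
    (y y' : Fin k → Fin b) :
    Measure.map (prepend y) ν (cylinder y') = if y' = y then 1 else 0 := by
  rw [Measure.map_apply (measurable_prepend y) (measurableSet_cylinder y')]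
  split
  · rename_i h
    rw [h, prepend_preimage_cylinder_self, measure_univ]
  · rename_i h
    rw [prepend_preimage_cylinder_ne h, measure_empty]

lemma mixM_cylinder (μ ν : Measure (SeqI b)) [IsProbabilityMeasure ν] (k : ℕ)
    (y : Fin k → Fin b) : mixM μ ν k (cylinder y) = coef μ k y := by
  rw [mixM, Measure.finset_sum_apply]
  rw [Finset.sum_eq_single y]
  · rw [Measure.smul_apply, smul_eq_mul, map_prepend_cylinder, if_pos rfl, mul_one]
  · intro y' _ hy'
    rw [Measure.smul_apply, smul_eq_mul, map_prepend_cylinder, if_neg (Ne.symm hy'), mul_zero]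
  · intro h
    exact absurd (Finset.mem_univ _) h

theorem mixM_prob (hb : 0 < b) (μ ν : Measure (SeqI b)) [IsProbabilityMeasure μ]
    [IsProbabilityMeasure ν] (k : ℕ) : IsProbabilityMeasure (mixM μ ν k) := by
  constructor
  rw [mixM, Measure.finset_sum_apply]
  have : ∀ y : Fin k → Fin b, (coef μ k y • Measure.map (prepend y) ν) univ = coef μ k y := by
    intro y
    rw [Measure.smul_apply, smul_eq_mul,
      Measure.map_apply (measurable_prepend y) MeasurableSet.univ]
    simp
  rw [Finset.sum_congr rfl fun y _ => this y]
  exact sum_coef hb μ k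

lemma submeasure_mixM (hb : 0 < b) (μ ν : Measure (SeqI b)) [IsProbabilityMeasure μ]
    [IsProbabilityMeasure ν] (k : ℕ) (y : Fin k → Fin b) :
    submeasure (mixM μ ν k) y = ν := by
  refine Measure.ext fun s hs => ?_
  rw [submeasure_apply _ y hs, mixM_cylinder μ ν k y]
  have hval : mixM μ ν k (cylinder y ∩ (fun (x : SeqI b) n => x (n + k)) ⁻¹' s)
      = coef μ k y * ν s := by
    rw [mixM, Measure.finset_sum_apply]
    rw [Finset.sum_eq_single y]
    · rw [Measure.smul_apply, smul_eq_mul,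
        Measure.map_apply (measurable_prepend y)
          ((measurableSet_cylinder y).inter (measurable_shift k hs))]
      have hpre : prepend y ⁻¹' (cylinder y ∩ (fun (x : SeqI b) n => x (n + k)) ⁻¹' s)
          = s := by
        rw [preimage_inter, prepend_preimage_cylinder_self, univ_inter]
        ext z
        simp only [mem_preimage]
        have hz0 : (fun n => prepend y z (n + k)) = z := shift_prepend y z
        constructor
        · intro hz
          rwa [hz0] at hz
        · intro hz
          show (fun n => prepend y z (n + k)) ∈ s
          rwa [hz0]
      rw [hpre]
    · intro y' _ hy'
      rw [Measure.smul_apply, smul_eq_mul,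
        Measure.map_apply (measurable_prepend y')
          ((measurableSet_cylinder y).inter (measurable_shift k hs))]
      rw [preimage_inter, prepend_preimage_cylinder_ne (Ne.symm hy'), empty_inter,
        measure_empty, mul_zero]
    · intro h
      exact absurd (Finset.mem_univ _) h
  rw [hval, ← mul_assoc, ENNReal.inv_mul_cancel (coef_ne_zero hb μ k y)
    (coef_ne_top hb μ k y), one_mul]

lemma coef_toReal (hb : 0 < b) (μ : Measure (SeqI b)) [IsProbabilityMeasure μ] (k : ℕ)
    (y : Fin k → Fin b) :
    (coef μ k y).toReal = (1 - ((k:ℝ) + 1)⁻¹) * (μ (cylinder y)).toReal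
      + ((k:ℝ) + 1)⁻¹ * ((b:ℝ) ^ k)⁻¹ := by
  have h1 : (1 - ((k:ℝ≥0∞) + 1)⁻¹) ≠ ⊤ := ne_top_of_le_ne_top ENNReal.one_ne_top tsub_le_self
  have he : (((k:ℝ≥0∞) + 1)⁻¹).toReal = ((k:ℝ) + 1)⁻¹ := by
    rw [ENNReal.toReal_inv, ENNReal.toReal_add (ENNReal.natCast_ne_top k) ENNReal.one_ne_top]
    simp
  have hbt : ((((b:ℝ≥0∞)) ^ k)⁻¹).toReal = ((b:ℝ) ^ k)⁻¹ := by
    rw [ENNReal.toReal_inv]; simp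
  rw [coef, ENNReal.toReal_add (ENNReal.mul_ne_top h1 (measure_ne_top _ _))
      (ENNReal.mul_ne_top (eps_ne_top k) (ENNReal.inv_ne_top.mpr (bpow_ne_zero hb k))),
    ENNReal.toReal_mul, ENNReal.toReal_mul,
    ENNReal.toReal_sub_of_le (eps_le_one k) ENNReal.one_ne_top, he, hbt, ENNReal.toReal_one]

lemma integrable_bcf (f : BoundedContinuousFunction (SeqI b) ℝ) (τ : Measure (SeqI b))
    [IsFiniteMeasure τ] : Integrable f τ :=
  f.continuous.integrable_of_hasCompactSupport (HasCompactSupport.of_compactSpace _)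

lemma integral_mixM (hb : 0 < b) (μ ν : Measure (SeqI b)) [IsProbabilityMeasure μ]
    [IsProbabilityMeasure ν] (k : ℕ) (f : BoundedContinuousFunction (SeqI b) ℝ) :
    ∫ x, f x ∂(mixM μ ν k)
      = ∑ y : Fin k → Fin b, (coef μ k y).toReal * ∫ z, f (prepend y z) ∂ν := by
  rw [mixM, integral_finset_sum_measure (fun y _ =>
    (integrable_bcf f _).smul_measure (coef_ne_top hb μ k y))]
  refine Finset.sum_congr rfl fun y _ => ?_
  rw [integral_smul_measure, smul_eq_mul,
    integral_map (measurable_prepend y).aemeasurable f.continuous.aestronglyMeasurable]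

lemma integral_eq_sum (μ : Measure (SeqI b)) [IsProbabilityMeasure μ] (k : ℕ)
    (f : BoundedContinuousFunction (SeqI b) ℝ) :
    ∫ x, f x ∂μ = ∑ y : Fin k → Fin b, ∫ x in cylinder y, f x ∂μ := by
  have h := MeasureTheory.integral_iUnion (μ := μ)
    (s := fun y : Fin k → Fin b => cylinder y)
    (fun y => measurableSet_cylinder y) (pairwise_disjoint_cylinder k)
    ((integrable_bcf f μ).integrableOn)
  rw [iUnion_cylinder, setIntegral_univ, tsum_fintype] at h
  exact h

lemma per_word_bound (hb : 0 < b) (μ ν : Measure (SeqI b)) [IsProbabilityMeasure μ]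
    [IsProbabilityMeasure ν] (f : BoundedContinuousFunction (SeqI b) ℝ) {ε' : ℝ}
    (hε' : 0 < ε') {m k : ℕ}
    (hm : ∀ x x' : SeqI b, (∀ i < m, x i = x' i) → |f x - f x'| ≤ ε') (hk : m ≤ k)
    (y : Fin k → Fin b) :
    |(coef μ k y).toReal * (∫ z, f (prepend y z) ∂ν) - ∫ x in cylinder y, f x ∂μ|
      ≤ ((k:ℝ) + 1)⁻¹ * (((b:ℝ) ^ k)⁻¹ + (μ (cylinder y)).toReal) * ‖f‖
        + 2 * ε' * (μ (cylinder y)).toReal := by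
  set μR := (μ (cylinder y)).toReal with hμR
  have hμR0 : 0 ≤ μR := ENNReal.toReal_nonneg
  set I := ∫ z, f (prepend y z) ∂ν with hI
  set J := ∫ x in cylinder y, f x ∂μ with hJ
  set e : SeqI b := prepend y (fun _ => ⟨0, hb⟩) with he
  -- first k coordinates of e are y
  have hey : ∀ i (hi : i < k), e i = y ⟨i, hi⟩ := by
    intro i hi
    rw [he]
    show prepend y _ i = _
    unfold prepend
    rw [dif_pos hi]
  -- bound |I| ≤ ‖f‖
  have hIbound : |I| ≤ ‖f‖ := by
    have := norm_integral_le_of_norm_le_const (μ := ν)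
      (f := fun z => f (prepend y z)) (C := ‖f‖)
      (Filter.Eventually.of_forall fun z => f.norm_coe_le_norm _)
    simpa using this
  -- bound |I - f e| ≤ ε'
  have hIe : |I - f e| ≤ ε' := by
    have hint : Integrable (fun z => f (prepend y z)) ν :=
      (f.continuous.comp (continuous_prepend y)).integrable_of_hasCompactSupport
        (HasCompactSupport.of_compactSpace _)
    have hIsub : I - f e = ∫ z, (f (prepend y z) - f e) ∂ν := by
      rw [integral_sub hint (integrable_const _), integral_const]
      simp [hI]
    rw [hIsub]
    have := norm_integral_le_of_norm_le_const (μ := ν)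
      (f := fun z => f (prepend y z) - f e) (C := ε')
      (Filter.Eventually.of_forall fun z => by
        rw [Real.norm_eq_abs]
        refine hm _ _ fun i hi => ?_
        have hik : i < k := lt_of_lt_of_le hi hk
        rw [hey i hik]
        show prepend y z i = _
        unfold prepend
        rw [dif_pos hik])
    simpa using this
  -- bound |J - μR * f e| ≤ ε' * μR
  have hJe : |J - μR * f e| ≤ ε' * μR := by
    have hconst : μR * f e = ∫ _x in cylinder y, f e ∂μ := by
      rw [setIntegral_const, smul_eq_mul]; rfl
    rw [hJ, hconst, ← integral_sub ((integrable_bcf f μ).integrableOn) (integrable_const _)]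
    have := norm_integral_le_of_norm_le_const (μ := μ.restrict (cylinder y))
      (f := fun x => f x - f e) (C := ε')
      (by
        filter_upwards [ae_restrict_mem (measurableSet_cylinder y)] with x hx
        rw [Real.norm_eq_abs]
        refine hm _ _ fun i hi => ?_
        have hik : i < k := lt_of_lt_of_le hi hk
        rw [hey i hik]
        exact hx ⟨i, hik⟩)
    rw [measureReal_restrict_apply_univ] at this
    simpa [hμR, measureReal_def] using this
  -- bound |coef.toReal - μR|
  have hcoef : |(coef μ k y).toReal - μR| ≤ ((k:ℝ) + 1)⁻¹ * (((b:ℝ) ^ k)⁻¹ + μR) := by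
    rw [coef_toReal hb μ k y, ← hμR]
    have harith : (1 - ((k:ℝ) + 1)⁻¹) * μR + ((k:ℝ) + 1)⁻¹ * ((b:ℝ) ^ k)⁻¹ - μR
        = ((k:ℝ) + 1)⁻¹ * (((b:ℝ) ^ k)⁻¹ - μR) := by ring
    rw [harith, abs_mul]
    have h1 : |((k:ℝ) + 1)⁻¹| = ((k:ℝ) + 1)⁻¹ := abs_of_nonneg (by positivity)
    have h2 : |((b:ℝ) ^ k)⁻¹ - μR| ≤ ((b:ℝ) ^ k)⁻¹ + μR := by
      refine (abs_sub _ _).trans ?_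
      rw [abs_of_nonneg (by positivity), abs_of_nonneg hμR0]
    rw [h1]
    exact mul_le_mul_of_nonneg_left h2 (by positivity)
  -- combine
  calc |(coef μ k y).toReal * I - J|
      = |((coef μ k y).toReal - μR) * I + (μR * (I - f e) + (μR * f e - J))| := by ring_nf
    _ ≤ |((coef μ k y).toReal - μR) * I| + |μR * (I - f e) + (μR * f e - J)| := abs_add_le _ _
    _ ≤ |((coef μ k y).toReal - μR) * I| + (|μR * (I - f e)| + |μR * f e - J|) :=
        add_le_add_right (abs_add_le _ _) _
    _ ≤ ((k:ℝ) + 1)⁻¹ * (((b:ℝ) ^ k)⁻¹ + μR) * ‖f‖ + (μR * ε' + ε' * μR) := by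
        refine add_le_add ?_ (add_le_add ?_ ?_)
        · rw [abs_mul]
          exact mul_le_mul hcoef hIbound (abs_nonneg _)
            (by positivity)
        · rw [abs_mul, abs_of_nonneg hμR0]
          exact mul_le_mul_of_nonneg_left hIe hμR0
        · rw [abs_sub_comm]
          exact hJe
    _ = _ := by ring


lemma sum_toReal_cylinder (μ : Measure (SeqI b)) [IsProbabilityMeasure μ] (k : ℕ) :
    ∑ y : Fin k → Fin b, (μ (cylinder y)).toReal = 1 := by
  rw [← ENNReal.toReal_sum (fun y _ => measure_ne_top μ _), sum_measure_cylinder,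
    ENNReal.toReal_one]

lemma sum_binv (hb : 0 < b) (k : ℕ) :
    ∑ _y : Fin k → Fin b, ((b:ℝ) ^ k)⁻¹ = 1 := by
  rw [Finset.sum_const, Finset.card_univ, Fintype.card_fun, Fintype.card_fin, Fintype.card_fin,
    nsmul_eq_mul, Nat.cast_pow, mul_inv_cancel₀ (pow_ne_zero _ (Nat.cast_ne_zero.mpr hb.ne'))]

lemma integral_mixM_close (hb : 0 < b) (μ ν : Measure (SeqI b)) [IsProbabilityMeasure μ]
    [IsProbabilityMeasure ν] (f : BoundedContinuousFunction (SeqI b) ℝ) {ε' : ℝ}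
    (hε' : 0 < ε') {m k : ℕ}
    (hm : ∀ x x' : SeqI b, (∀ i < m, x i = x' i) → |f x - f x'| ≤ ε') (hk : m ≤ k) :
    |∫ x, f x ∂(mixM μ ν k) - ∫ x, f x ∂μ| ≤ ((k:ℝ) + 1)⁻¹ * 2 * ‖f‖ + 2 * ε' := by
  rw [integral_mixM hb μ ν k f, integral_eq_sum μ k f, ← Finset.sum_sub_distrib]
  refine (Finset.abs_sum_le_sum_abs _ _).trans ?_
  refine (Finset.sum_le_sum fun y _ => per_word_bound hb μ ν f hε' hm hk y).trans ?_
  rw [Finset.sum_add_distrib]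
  have h1 : ∑ y : Fin k → Fin b,
      ((k:ℝ) + 1)⁻¹ * (((b:ℝ) ^ k)⁻¹ + (μ (cylinder y)).toReal) * ‖f‖
      = ((k:ℝ) + 1)⁻¹ * 2 * ‖f‖ := by
    calc ∑ y : Fin k → Fin b,
        ((k:ℝ) + 1)⁻¹ * (((b:ℝ) ^ k)⁻¹ + (μ (cylinder y)).toReal) * ‖f‖
        = ((k:ℝ) + 1)⁻¹ * (∑ y : Fin k → Fin b,
            (((b:ℝ) ^ k)⁻¹ + (μ (cylinder y)).toReal)) * ‖f‖ := by
          rw [← Finset.sum_mul, ← Finset.mul_sum]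
      _ = _ := by
          rw [Finset.sum_add_distrib, sum_binv hb, sum_toReal_cylinder]
          norm_num
  have h2 : ∑ y : Fin k → Fin b, 2 * ε' * (μ (cylinder y)).toReal = 2 * ε' := by
    rw [← Finset.mul_sum, sum_toReal_cylinder, mul_one]
  rw [h1, h2]

def mixPM (hb : 0 < b) (μ ν : ProbabilityMeasure (SeqI b)) (k : ℕ) :
    ProbabilityMeasure (SeqI b) :=
  ⟨mixM (μ : Measure (SeqI b)) (ν : Measure (SeqI b)) k,
    mixM_prob hb (μ : Measure (SeqI b)) (ν : Measure (SeqI b)) k⟩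

theorem tendsto_mixPM (hb : 0 < b) (μ ν : ProbabilityMeasure (SeqI b)) :
    Tendsto (fun k => mixPM hb μ ν k) atTop (𝓝 μ) := by
  rw [ProbabilityMeasure.tendsto_iff_forall_integral_tendsto]
  intro f
  rw [Metric.tendsto_atTop]
  intro ε hε
  obtain ⟨m, hm⟩ := unif_cont f.continuous (show (0:ℝ) < ε/8 by linarith)
  have ha : Tendsto (fun k : ℕ => ((k:ℝ) + 1)⁻¹) atTop (𝓝 0) :=
    tendsto_inv_atTop_zero.comp (tendsto_atTop_add_const_right _ 1 tendsto_natCast_atTop_atTop)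
  have h1 : Tendsto (fun k : ℕ => ((k:ℝ) + 1)⁻¹ * 2 * ‖f‖) atTop (𝓝 0) := by
    have := (ha.mul_const 2).mul_const ‖f‖
    simpa using this
  have h2 : ∀ᶠ (k : ℕ) in atTop, ((k:ℝ) + 1)⁻¹ * 2 * ‖f‖ < ε / 2 :=
    h1.eventually (gt_mem_nhds (by linarith))
  obtain ⟨K, hK⟩ := eventually_atTop.mp h2
  refine ⟨max m K, fun k hk => ?_⟩
  have hkm : m ≤ k := le_trans (le_max_left _ _) hk
  have hkK : K ≤ k := le_trans (le_max_right _ _) hk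
  have hclose := integral_mixM_close hb (μ : Measure (SeqI b)) (ν : Measure (SeqI b)) f
    (show (0:ℝ) < ε/8 by linarith) hm hkm
  rw [Real.dist_eq]
  have hcoe : ∫ ω, f ω ∂((mixPM hb μ ν k : ProbabilityMeasure (SeqI b)) : Measure (SeqI b))
      = ∫ x, f x ∂(mixM (μ : Measure (SeqI b)) (ν : Measure (SeqI b)) k) := rfl
  rw [hcoe]
  have := hK k hkK
  calc |∫ x, f x ∂(mixM (μ : Measure (SeqI b)) (ν : Measure (SeqI b)) k)
      - ∫ ω, f ω ∂(μ : Measure (SeqI b))|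
      ≤ ((k:ℝ) + 1)⁻¹ * 2 * ‖f‖ + 2 * (ε/8) := hclose
    _ < ε / 2 + 2 * (ε/8) := by linarith
    _ < ε := by linarith

theorem dense_Rmicro (hb : 0 < b) (ν : ProbabilityMeasure (SeqI b)) {n : ℕ} (hn : 0 < n) :
    Dense (Rmicro (ν : Measure (SeqI b)) n) := by
  intro μ
  refine mem_closure_of_tendsto (tendsto_mixPM hb μ ν) ?_
  filter_upwards [eventually_ge_atTop n] with k hk
  refine mem_iUnion₂.2 ⟨k, hk, mem_iInter.2 fun y => ?_⟩
  have hcoe : ((mixPM hb μ ν k : ProbabilityMeasure (SeqI b)) : Measure (SeqI b))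
      = mixM (μ : Measure (SeqI b)) (ν : Measure (SeqI b)) k := rfl
  refine ⟨?_, ?_⟩
  · show ((mixPM hb μ ν k : ProbabilityMeasure (SeqI b)) : Measure (SeqI b))
      (cylinder y) ≠ 0
    rw [hcoe, mixM_cylinder]
    exact coef_ne_zero hb _ k y
  · show piDist (submeasure
      ((mixPM hb μ ν k : ProbabilityMeasure (SeqI b)) : Measure (SeqI b)) y)
      (ν : Measure (SeqI b)) < 1 / (k:ℝ)
    rw [hcoe, submeasure_mixM hb]
    have h0 := piDist_self_nonpos (ν : Measure (SeqI b))
    have hkpos : (0:ℝ) < 1 / (k:ℝ) := by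
      have hk0 : 0 < k := lt_of_lt_of_le hn hk
      have : (0:ℝ) < (k:ℝ) := by exact_mod_cast hk0
      positivity
    linarith

end Aux

/-- if `S ⊂ P(I^ℕ)` is countable, dense, and consists of measures giving
positive mass to every cylinder, then for every `ν ∈ S` and `n ∈ ℕ` the set `R_{ν,n}`
is open and dense in `P(I^ℕ)`. -/
theorem stmt_13 (b : ℕ) (hb : 0 < b)
    (S : Set (ProbabilityMeasure (SeqI b))) (hScount : S.Countable) (hSdense : Dense S)
    (hSpos : ∀ ν ∈ S, ∀ (k : ℕ) (y : Fin k → Fin b),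
      (ν : Measure (SeqI b)) (cylinder y) ≠ 0)
    (ν : ProbabilityMeasure (SeqI b)) (hν : ν ∈ S) (n : ℕ) (hn : 0 < n) :
    IsOpen (Rmicro (ν : Measure (SeqI b)) n) ∧
    Dense (Rmicro (ν : Measure (SeqI b)) n) := by
  exact ⟨isOpen_Rmicro hb (ν : Measure (SeqI b)) n, dense_Rmicro hb ν hn⟩

end
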